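/- Let γ: RP^1 → RP^1 be piecewise projective (piecewise in PSL(2,R)) and let x be a break point with left germ γ⁻ and right germ γ⁺ in PSL(2,R). Then γ is C¹ at x if and only if the shift D_xγ = (γ⁺)⁻¹ ∘ γ⁻ (an element of PSL(2,R) fixing x) preserves every horocycle based at x. -/

import Mathlib

noncomputable section

open Matrix

/-- The Möbius transformation of the real line induced by a matrix in `SL(2,ℝ)`
(a representative of an element of `PSL(2,ℝ)` acting on `ℝP¹`). -/
def moebiusR (A : Matrix.SpecialLinearGroup (Fin 2) ℝ) (t : ℝ) : ℝ :=
  ((A : Matrix (Fin 2) (Fin 2) ℝ) 0 0 * t + (A : Matrix (Fin 2) (Fin 2) ℝ) 0 1) /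
    ((A : Matrix (Fin 2) (Fin 2) ℝ) 1 0 * t + (A : Matrix (Fin 2) (Fin 2) ℝ) 1 1)

/-- The Möbius transformation of the complex plane induced by a matrix in `SL(2,ℝ)`. -/
def moebiusC (A : Matrix.SpecialLinearGroup (Fin 2) ℝ) (z : ℂ) : ℂ :=
  (((A : Matrix (Fin 2) (Fin 2) ℝ) 0 0 : ℂ) * z + ((A : Matrix (Fin 2) (Fin 2) ℝ) 0 1 : ℂ)) /
    (((A : Matrix (Fin 2) (Fin 2) ℝ) 1 0 : ℂ) * z + ((A : Matrix (Fin 2) (Fin 2) ℝ) 1 1 : ℂ))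

/-- The horocycle of (Euclidean) radius `r` based at the ideal point `x ∈ ℝ = ∂H²` in the
upper half-plane model: the circle of radius `r` tangent to the real axis at `x`. -/
def horocycle (x : ℝ) (r : ℝ) : Set ℂ :=
  {z : ℂ | ‖z - (x + r * Complex.I)‖ = r}

namespace CppAux

lemma abs_eq_iff_normSq {w : ℂ} {r : ℝ} (hr : 0 < r) :
    ‖w‖ = r ↔ Complex.normSq w = r ^ 2 := by
  rw [← Complex.sq_norm]
  constructor
  · intro h; rw [h]
  · intro h
    have h0 : 0 ≤ ‖w‖ := norm_nonneg _
    nlinarith [h, h0, hr]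

lemma mem_horocycle_iff {x r : ℝ} (hr : 0 < r) {z : ℂ} :
    z ∈ horocycle x r ↔ Complex.normSq (z - x) = 2 * r * z.im := by
  rw [horocycle, Set.mem_setOf_eq, abs_eq_iff_normSq hr]
  simp only [Complex.normSq_apply, Complex.sub_re, Complex.sub_im, Complex.add_re,
    Complex.add_im, Complex.ofReal_re, Complex.ofReal_im, Complex.mul_re, Complex.mul_im,
    Complex.I_re, Complex.I_im]
  constructor <;> intro h <;> nlinarith [h]

lemma denom_ne_zero {c d x r : ℝ} (hr : 0 < r) (hu : c * x + d ≠ 0) {z : ℂ}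
    (hz : z ∈ horocycle x r) : (c : ℂ) * z + d ≠ 0 := by
  intro h
  have him : c * z.im = 0 := by
    have := congrArg Complex.im h; simpa using this
  have hre : c * z.re + d = 0 := by
    have := congrArg Complex.re h; simpa using this
  rcases mul_eq_zero.1 him with hc | hzim
  · apply hu
    rw [hc] at hre ⊢
    simpa using hre
  · have hmem := (mem_horocycle_iff hr).1 hz
    rw [hzim] at hmem
    have hz0 : z - (x : ℂ) = 0 := Complex.normSq_eq_zero.1 (by simpa using hmem)
    have hzx : z = (x : ℂ) := sub_eq_zero.1 hz0
    apply hu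
    have : z.re = x := by rw [hzx]; simp
    rw [← this]; exact hre

lemma map_horocycle_mem {a b c d x r : ℝ} (hdet : a * d - b * c = 1) (hr : 0 < r)
    (hu : c * x + d ≠ 0) {z : ℂ} (hz : z ∈ horocycle x r) :
    ((a : ℂ) * z + b) / ((c : ℂ) * z + d) ∈
      horocycle ((a * x + b) / (c * x + d)) (r / (c * x + d) ^ 2) := by
  have hdetC : (a : ℂ) * d - b * c = 1 := by exact_mod_cast hdet
  have hr' : 0 < r / (c * x + d) ^ 2 := div_pos hr (by positivity)
  have hzd : (c : ℂ) * z + d ≠ 0 := denom_ne_zero hr hu hz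
  have hud : ((c * x + d : ℝ) : ℂ) ≠ 0 := by exact_mod_cast hu
  have hN : Complex.normSq ((c : ℂ) * z + d) ≠ 0 := (Complex.normSq_pos.2 hzd).ne'
  rw [mem_horocycle_iff hr] at hz
  rw [mem_horocycle_iff hr']
  have hdiff : ((a : ℂ) * z + b) / ((c : ℂ) * z + d) - (((a * x + b) / (c * x + d) : ℝ) : ℂ) =
      (z - x) / (((c : ℂ) * z + d) * ((c * x + d : ℝ) : ℂ)) := by
    have hcd : (c : ℂ) * x + d ≠ 0 := by push_cast at hud ⊢; exact hud
    rw [Complex.ofReal_div]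
    push_cast
    rw [div_sub_div _ _ hzd hcd, div_eq_div_iff (mul_ne_zero hzd hcd) (mul_ne_zero hzd hcd)]
    linear_combination ((z - (x : ℂ)) * ((c : ℂ) * z + d) * ((c : ℂ) * x + d)) * hdetC
  have him : (((a : ℂ) * z + b) / ((c : ℂ) * z + d)).im =
      z.im / Complex.normSq ((c : ℂ) * z + d) := by
    rw [Complex.div_im]
    simp only [Complex.add_re, Complex.add_im, Complex.mul_re, Complex.mul_im,
      Complex.ofReal_re, Complex.ofReal_im]
    rw [div_sub_div_same]
    congr 1
    linear_combination z.im * hdet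
  rw [hdiff, Complex.normSq_div, Complex.normSq_mul, Complex.normSq_ofReal, him]
  rw [hz]
  rw [div_eq_iff (by positivity)]
  field_simp

lemma moebius_cancel {a b c d : ℝ} (hdet : a * d - b * c = 1) {w : ℂ}
    (hw : ((-c : ℝ) : ℂ) * w + ((a : ℝ) : ℂ) ≠ 0) :
    ((a : ℂ) * (((d : ℂ) * w + ((-b : ℝ) : ℂ)) / (((-c : ℝ) : ℂ) * w + ((a : ℝ) : ℂ))) + b) /
      ((c : ℂ) * (((d : ℂ) * w + ((-b : ℝ) : ℂ)) / (((-c : ℝ) : ℂ) * w + ((a : ℝ) : ℂ))) + d)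
      = w := by
  have hdetC : (a : ℂ) * d - b * c = 1 := by exact_mod_cast hdet
  have hw2 : -((c : ℂ) * w) + a ≠ 0 := by
    intro h; apply hw; push_cast; rw [← h]; ring
  set z : ℂ := ((d : ℂ) * w + ((-b : ℝ) : ℂ)) / (((-c : ℝ) : ℂ) * w + ((a : ℝ) : ℂ)) with hzdef
  have hkey : ((c : ℂ) * z + d) * (((-c : ℝ) : ℂ) * w + ((a : ℝ) : ℂ)) = 1 := by
    rw [hzdef]
    push_cast
    field_simp [hw2]
    linear_combination hdetC
  have hden : (c : ℂ) * z + d ≠ 0 := left_ne_zero_of_mul_eq_one hkey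
  have hw3 : -(w * (c : ℂ)) + a ≠ 0 := by intro h; apply hw2; linear_combination h
  rw [div_eq_iff hden, hzdef]
  push_cast
  field_simp [hw2, hw3]
  ring_nf

lemma preserves_iff {a b c d x : ℝ} (hdet : a * d - b * c = 1) (hu : c * x + d ≠ 0)
    (hfix : a * x + b = x * (c * x + d)) :
    (∀ r > 0, (fun z => ((a : ℂ) * z + b) / ((c : ℂ) * z + d)) '' horocycle x r = horocycle x r)
      ↔ (c * x + d) ^ 2 = 1 := by
  have hx' : (a * x + b) / (c * x + d) = x := by
    rw [hfix]; exact mul_div_cancel_right₀ x hu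
  constructor
  · intro hpres
    set z : ℂ := (x : ℂ) + 2 * Complex.I with hzdef
    have hz : z ∈ horocycle x 1 := by
      rw [mem_horocycle_iff one_pos]
      simp [hzdef, Complex.normSq_apply]
    have hw1 : ((a : ℂ) * z + b) / ((c : ℂ) * z + d) ∈ horocycle x 1 := by
      rw [← hpres 1 one_pos]; exact ⟨z, hz, rfl⟩
    have hw2 := map_horocycle_mem hdet one_pos hu hz
    rw [hx'] at hw2
    set w : ℂ := ((a : ℂ) * z + b) / ((c : ℂ) * z + d) with hwdef
    have hzd : (c : ℂ) * z + d ≠ 0 := denom_ne_zero one_pos hu hz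
    by_cases him : w.im = 0
    · exfalso
      have h0 : Complex.normSq (w - x) = 0 := by
        rw [mem_horocycle_iff one_pos] at hw1; rw [hw1, him]; ring
      have hwx : w = (x : ℂ) := sub_eq_zero.1 (Complex.normSq_eq_zero.1 h0)
      have heq : (a : ℂ) * z + b = (x : ℂ) * ((c : ℂ) * z + d) := by
        rw [← hwx, hwdef, div_mul_eq_mul_div, eq_div_iff hzd]
      have himeq : a * 2 = x * (c * 2) := by
        have := congrArg Complex.im heq
        simpa [hzdef] using this
      have hac : a = x * c := by linear_combination himeq / 2
      have hbd : b = x * d := by linear_combination hfix - x * hac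
      rw [hac, hbd] at hdet
      exact zero_ne_one (by linear_combination hdet : (0 : ℝ) = 1)
    · rw [mem_horocycle_iff one_pos] at hw1
      rw [mem_horocycle_iff (by positivity)] at hw2
      have heq2 : 2 * 1 * w.im = 2 * (1 / (c * x + d) ^ 2) * w.im := by rw [← hw1, ← hw2]
      have h2 : (2 : ℝ) * 1 = 2 * (1 / (c * x + d) ^ 2) :=
        mul_right_cancel₀ him heq2
      have hu2 : (c * x + d) ^ 2 ≠ 0 := by positivity
      field_simp at h2
      nlinarith [h2]
  · intro hsq r hr
    have hru : r / (c * x + d) ^ 2 = r := by rw [hsq]; simp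
    ext w
    constructor
    · rintro ⟨z, hz, rfl⟩
      have := map_horocycle_mem hdet hr hu hz
      rwa [hx', hru] at this
    · intro hw
      have hdet' : d * a - (-b) * (-c) = 1 := by linear_combination hdet
      have hprod : ((-c) * x + a) * (c * x + d) = 1 := by linear_combination hdet + c * hfix
      have hu' : (-c) * x + a ≠ 0 := left_ne_zero_of_mul_eq_one hprod
      have hfix' : d * x + (-b) = x * ((-c) * x + a) := by linear_combination (-1 : ℝ) * hfix
      have hsq' : ((-c) * x + a) ^ 2 = 1 := by
        have h2 : ((-c) * x + a) ^ 2 * (c * x + d) ^ 2 = 1 := by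
          rw [← mul_pow, hprod, one_pow]
        rw [hsq, mul_one] at h2; exact h2
      have hmem := map_horocycle_mem hdet' hr hu' hw
      have hx'' : (d * x + -b) / (-c * x + a) = x := by
        rw [hfix']; exact mul_div_cancel_right₀ x hu'
      have hru' : r / (-c * x + a) ^ 2 = r := by rw [hsq']; simp
      rw [hx'', hru'] at hmem
      refine ⟨_, hmem, ?_⟩
      have hwne : ((-c : ℝ) : ℂ) * w + ((a : ℝ) : ℂ) ≠ 0 := denom_ne_zero hr hu' hw
      exact moebius_cancel hdet hwne

lemma hasDerivAt_moebius {a b c d t : ℝ} (hdet : a * d - b * c = 1) (ht : c * t + d ≠ 0) :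
    HasDerivAt (fun s => (a * s + b) / (c * s + d)) (((c * t + d) ^ 2)⁻¹) t := by
  have h1 : HasDerivAt (fun s : ℝ => a * s + b) a t := by
    simpa using ((hasDerivAt_id t).const_mul a).add_const b
  have h2 : HasDerivAt (fun s : ℝ => c * s + d) c t := by
    simpa using ((hasDerivAt_id t).const_mul c).add_const d
  have h3 := h1.div h2 ht
  refine h3.congr_deriv ?_
  rw [inv_eq_one_div, div_eq_div_iff (by positivity) (by positivity)]
  linear_combination (c * t + d) ^ 2 * hdet

end CppAux

open CppAux in
theorem cpp_C1_iff_shift_preserves_horocycles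
    (γ : ℝ → ℝ) (x : ℝ) (A B : Matrix.SpecialLinearGroup (Fin 2) ℝ) (ε : ℝ) (hε : 0 < ε)
    (hL : ∀ t ∈ Set.Ioo (x - ε) x, γ t = moebiusR A t)
    (hR : ∀ t ∈ Set.Ico x (x + ε), γ t = moebiusR B t)
    (hLpole : ∀ t ∈ Set.Ioc (x - ε) x,
      (A : Matrix (Fin 2) (Fin 2) ℝ) 1 0 * t + (A : Matrix (Fin 2) (Fin 2) ℝ) 1 1 ≠ 0)
    (hRpole : ∀ t ∈ Set.Ico x (x + ε),
      (B : Matrix (Fin 2) (Fin 2) ℝ) 1 0 * t + (B : Matrix (Fin 2) (Fin 2) ℝ) 1 1 ≠ 0)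
    (hval : moebiusR A x = moebiusR B x) :
    ContDiffAt ℝ 1 γ x ↔
      ∀ r > 0, moebiusC (B⁻¹ * A) '' horocycle x r = horocycle x r := by
  set aA := (A : Matrix (Fin 2) (Fin 2) ℝ) 0 0 with haA
  set bA := (A : Matrix (Fin 2) (Fin 2) ℝ) 0 1 with hbA
  set cA := (A : Matrix (Fin 2) (Fin 2) ℝ) 1 0 with hcA
  set dA := (A : Matrix (Fin 2) (Fin 2) ℝ) 1 1 with hdA
  set aB := (B : Matrix (Fin 2) (Fin 2) ℝ) 0 0 with haB
  set bB := (B : Matrix (Fin 2) (Fin 2) ℝ) 0 1 with hbB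
  set cB := (B : Matrix (Fin 2) (Fin 2) ℝ) 1 0 with hcB
  set dB := (B : Matrix (Fin 2) (Fin 2) ℝ) 1 1 with hdB
  have detA : aA * dA - bA * cA = 1 := by
    have h := A.2
    rw [Matrix.det_fin_two] at h
    linarith [h]
  have detB : aB * dB - bB * cB = 1 := by
    have h := B.2
    rw [Matrix.det_fin_two] at h
    linarith [h]
  have hQA : cA * x + dA ≠ 0 := hLpole x ⟨by linarith, le_refl x⟩
  have hQB : cB * x + dB ≠ 0 := hRpole x ⟨le_refl x, by linarith⟩
  have hvr : (aA * x + bA) * (cB * x + dB) = (aB * x + bB) * (cA * x + dA) := by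
    have h := hval
    rw [moebiusR, moebiusR, div_eq_div_iff hQA hQB] at h
    exact h
  -- entries of the shift C = B⁻¹ * A
  have hM : ((B⁻¹ * A : Matrix.SpecialLinearGroup (Fin 2) ℝ) : Matrix (Fin 2) (Fin 2) ℝ) =
      !![dB * aA - bB * cA, dB * bA - bB * dA; aB * cA - cB * aA, aB * dA - cB * bA] := by
    rw [Matrix.SpecialLinearGroup.coe_mul, Matrix.SpecialLinearGroup.coe_inv,
      Matrix.adjugate_fin_two ((B : Matrix (Fin 2) (Fin 2) ℝ)),
      Matrix.eta_fin_two ((A : Matrix (Fin 2) (Fin 2) ℝ)), Matrix.mul_fin_two]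
    ext i j
    fin_cases i <;> fin_cases j <;> simp <;> ring
  have hCfun : moebiusC (B⁻¹ * A) = fun z : ℂ =>
      (((dB * aA - bB * cA : ℝ) : ℂ) * z + ((dB * bA - bB * dA : ℝ) : ℂ)) /
        (((aB * cA - cB * aA : ℝ) : ℂ) * z + ((aB * dA - cB * bA : ℝ) : ℂ)) := by
    funext z
    rw [moebiusC, hM]
    simp
  have detC : (dB * aA - bB * cA) * (aB * dA - cB * bA) -
      (dB * bA - bB * dA) * (aB * cA - cB * aA) = 1 := by
    linear_combination (aB * dB - bB * cB) * detA + detB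
  have hqCqB : ((aB * cA - cB * aA) * x + (aB * dA - cB * bA)) * (cB * x + dB) =
      cA * x + dA := by
    linear_combination (-cB) * hvr + (cA * x + dA) * detB
  have hqC_ne : (aB * cA - cB * aA) * x + (aB * dA - cB * bA) ≠ 0 := by
    intro h
    rw [h, zero_mul] at hqCqB
    exact hQA hqCqB.symm
  have h1 : ((dB * aA - bB * cA) * x + (dB * bA - bB * dA)) * (cB * x + dB) =
      x * (cA * x + dA) := by
    linear_combination dB * hvr + (x * (cA * x + dA)) * detB
  have hfixC : (dB * aA - bB * cA) * x + (dB * bA - bB * dA) =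
      x * ((aB * cA - cB * aA) * x + (aB * dA - cB * bA)) :=
    mul_right_cancel₀ hQB (by linear_combination h1 - x * hqCqB)
  -- the right-hand side is equivalent to qC² = 1, i.e. qA² = qB²
  have hRHS : (∀ r > 0, moebiusC (B⁻¹ * A) '' horocycle x r = horocycle x r) ↔
      ((aB * cA - cB * aA) * x + (aB * dA - cB * bA)) ^ 2 = 1 := by
    rw [hCfun]
    exact preserves_iff detC hqC_ne hfixC
  have hsq_iff : ((aB * cA - cB * aA) * x + (aB * dA - cB * bA)) ^ 2 = 1 ↔
      (cA * x + dA) ^ 2 = (cB * x + dB) ^ 2 := by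
    have h2 : ((aB * cA - cB * aA) * x + (aB * dA - cB * bA)) ^ 2 * (cB * x + dB) ^ 2 =
        (cA * x + dA) ^ 2 := by rw [← mul_pow, hqCqB]
    constructor
    · intro h; rw [h, one_mul] at h2; exact h2.symm
    · intro h
      apply mul_right_cancel₀ (pow_ne_zero 2 hQB)
      rw [h2, one_mul, h]
  rw [hRHS, hsq_iff]
  -- now the calculus part
  have hAe : ∀ y ∈ Set.Ioc (x - ε) x, γ y = moebiusR A y := by
    intro y hy
    rcases eq_or_lt_of_le hy.2 with h | h
    · subst h
      rw [hR y ⟨le_rfl, by linarith⟩, ← hval]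
    · exact hL y ⟨hy.1, h⟩
  have hdmA : HasDerivAt (moebiusR A) (((cA * x + dA) ^ 2)⁻¹) x :=
    hasDerivAt_moebius detA hQA
  have hdmB : HasDerivAt (moebiusR B) (((cB * x + dB) ^ 2)⁻¹) x :=
    hasDerivAt_moebius detB hQB
  have hWA : HasDerivWithinAt γ (((cA * x + dA) ^ 2)⁻¹) (Set.Iic x) x := by
    apply hdmA.hasDerivWithinAt.congr_of_eventuallyEq
    · filter_upwards [mem_nhdsWithin_of_mem_nhds
        (Ioo_mem_nhds (by linarith : x - ε < x) (by linarith : x < x + ε)),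
        self_mem_nhdsWithin] with y h1 h2
      exact hAe y ⟨h1.1, h2⟩
    · exact hAe x ⟨by linarith, le_rfl⟩
  have hWB : HasDerivWithinAt γ (((cB * x + dB) ^ 2)⁻¹) (Set.Ici x) x := by
    apply hdmB.hasDerivWithinAt.congr_of_eventuallyEq
    · filter_upwards [mem_nhdsWithin_of_mem_nhds
        (Ioo_mem_nhds (by linarith : x - ε < x) (by linarith : x < x + ε)),
        self_mem_nhdsWithin] with y h1 h2
      exact hR y ⟨h2, h1.2⟩
    · exact hR x ⟨le_rfl, by linarith⟩
  constructor
  · intro h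
    have hd := (h.differentiableAt one_ne_zero).hasDerivAt
    have e1 : derivWithin γ (Set.Iic x) x = ((cA * x + dA) ^ 2)⁻¹ :=
      hWA.derivWithin ((uniqueDiffOn_Iic x) x Set.self_mem_Iic)
    have e2 : derivWithin γ (Set.Iic x) x = deriv γ x :=
      (hd.hasDerivWithinAt).derivWithin ((uniqueDiffOn_Iic x) x Set.self_mem_Iic)
    have e3 : derivWithin γ (Set.Ici x) x = ((cB * x + dB) ^ 2)⁻¹ :=
      hWB.derivWithin ((uniqueDiffOn_Ici x) x Set.self_mem_Ici)
    have e4 : derivWithin γ (Set.Ici x) x = deriv γ x :=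
      (hd.hasDerivWithinAt).derivWithin ((uniqueDiffOn_Ici x) x Set.self_mem_Ici)
    have : ((cA * x + dA) ^ 2)⁻¹ = ((cB * x + dB) ^ 2)⁻¹ := by
      rw [← e1, ← e3, e2, e4]
    exact inv_injective this
  · intro hq
    have hqinv : ((cA * x + dA) ^ 2)⁻¹ = ((cB * x + dB) ^ 2)⁻¹ := by rw [hq]
    refine contDiffAt_one_iff.2
      ⟨fun y => ContinuousLinearMap.smulRight (1 : ℝ →L[ℝ] ℝ)
        (if y < x then ((cA * y + dA) ^ 2)⁻¹ else ((cB * y + dB) ^ 2)⁻¹),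
       Set.Ioo (x - ε) (x + ε),
       Ioo_mem_nhds (by linarith) (by linarith), ?_, ?_⟩
    · -- continuity of the derivative
      have hg' : ContinuousOn
          (fun y => if y < x then ((cA * y + dA) ^ 2)⁻¹ else ((cB * y + dB) ^ 2)⁻¹)
          (Set.Ioo (x - ε) (x + ε)) := by
        intro y hy
        have hcontA : ∀ t ∈ Set.Ioc (x - ε) x,
            ContinuousAt (fun s => ((cA * s + dA) ^ 2)⁻¹) t := by
          intro t ht
          exact ContinuousAt.inv₀ (by fun_prop) (pow_ne_zero 2 (hLpole t ht))
        have hcontB : ∀ t ∈ Set.Ico x (x + ε),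
            ContinuousAt (fun s => ((cB * s + dB) ^ 2)⁻¹) t := by
          intro t ht
          exact ContinuousAt.inv₀ (by fun_prop) (pow_ne_zero 2 (hRpole t ht))
        rcases lt_trichotomy y x with hlt | heq | hgt
        · apply ContinuousAt.continuousWithinAt
          apply (hcontA y ⟨hy.1, hlt.le⟩).congr
          filter_upwards [Iio_mem_nhds hlt] with t ht
          exact (if_pos (Set.mem_Iio.1 ht)).symm
        · rw [heq]
          
          have hc1 : ContinuousWithinAt
              (fun y => if y < x then ((cA * y + dA) ^ 2)⁻¹ else ((cB * y + dB) ^ 2)⁻¹)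
              (Set.Iio x) x := by
            apply ((hcontA x ⟨by linarith, le_rfl⟩).continuousWithinAt).congr
            · intro t ht; rw [if_pos (Set.mem_Iio.1 ht)]
            · rw [if_neg (lt_irrefl x)]; exact hqinv.symm
          have hc2 : ContinuousWithinAt
              (fun y => if y < x then ((cA * y + dA) ^ 2)⁻¹ else ((cB * y + dB) ^ 2)⁻¹)
              (Set.Ici x) x := by
            apply ((hcontB x ⟨le_rfl, by linarith⟩).continuousWithinAt).congr
            · intro t ht; rw [if_neg (not_lt.2 (Set.mem_Ici.1 ht))]
            · rw [if_neg (lt_irrefl x)]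
          have := hc1.union hc2
          rw [Set.Iio_union_Ici] at this
          exact this.mono (Set.subset_univ _)
        · apply ContinuousAt.continuousWithinAt
          apply (hcontB y ⟨hgt.le, hy.2⟩).congr
          filter_upwards [Ioi_mem_nhds hgt] with t ht
          exact (if_neg (not_lt.2 (Set.mem_Ioi.1 ht).le)).symm
      exact ((ContinuousLinearMap.smulRightL ℝ ℝ ℝ (1 : ℝ →L[ℝ] ℝ)).continuous.comp_continuousOn hg')
    · -- differentiability
      intro y hy
      beta_reduce
      rw [ContinuousLinearMap.smulRight_one_eq_toSpanSingleton, ← hasDerivAt_iff_hasFDerivAt]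
      rcases lt_trichotomy y x with hlt | heq | hgt
      · rw [if_pos hlt]
        apply (hasDerivAt_moebius detA (hLpole y ⟨hy.1, hlt.le⟩)).congr_of_eventuallyEq
        filter_upwards [Ioo_mem_nhds hy.1 hlt] with t ht
        exact hL t ht
      · rw [heq, if_neg (lt_irrefl x)]
        have hWA' : HasDerivWithinAt γ (((cB * x + dB) ^ 2)⁻¹) (Set.Iic x) x := by
          rw [← hqinv]; exact hWA
        have hU := hWA'.union hWB
        rw [Set.Iic_union_Ici] at hU
        exact hasDerivWithinAt_univ.1 hU
      · rw [if_neg (not_lt.2 hgt.le)]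
        apply (hasDerivAt_moebius detB (hRpole y ⟨hgt.le, hy.2⟩)).congr_of_eventuallyEq
        filter_upwards [Ioo_mem_nhds hgt hy.2] with t ht
        exact hR t ⟨ht.1.le, ht.2⟩
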